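/- Under the same hypotheses (strongly connected unambiguous automaton with spectral radius 1, accepting run ρ labeled by a normal sequence), for every finite run γ = q_0 →a1 q_1 ⋯ →an q_n of length n, the limiting frequency of γ as a factor of ρ exists and equals π_{q_0} α_{q_n} / (#A)^n. -/

import Mathlib

open Matrix BigOperators Filter

set_option linter.unusedSectionVars false
set_option maxHeartbeats 1000000

/-- A run of length `n` from `p` to `q` labeled by the word `w`. -/
def IsRun {Q A : Type*} (Δ : Q → A → Q → Prop) {n : ℕ} (w : Fin n → A)
    (p q : Q) (s : Fin (n + 1) → Q) : Prop :=
  s 0 = p ∧ s (Fin.last n) = q ∧ ∀ i : Fin n, Δ (s i.castSucc) (w i) (s i.succ)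

/-- `s` is an accepting run labeled `x`: it starts in `I`, follows transitions of `Δ`,
and visits the final set `Fst` infinitely often. -/
def IsAcceptingRun {Q A : Type*} (Δ : Q → A → Q → Prop) (I Fst : Set Q)
    (x : ℕ → A) (s : ℕ → Q) : Prop :=
  s 0 ∈ I ∧ (∀ i, Δ (s i) (x i) (s (i + 1))) ∧ ∀ m, ∃ k, m ≤ k ∧ s k ∈ Fst

/-- Number of occurrences of the word `w` starting in the first `n` positions of `x`. -/
def occCount {A : Type*} [DecidableEq A] (x : ℕ → A) (w : List A) (n : ℕ) : ℕ :=
  ((Finset.range n).filter (fun i => ∀ j : Fin w.length, x (i + j) = w.get j)).card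

/-- A sequence is normal if every nonempty finite word occurs with limiting
frequency `(#A)^{-|w|}`. -/
def IsNormal {A : Type*} [Fintype A] [DecidableEq A] (x : ℕ → A) : Prop :=
  ∀ w : List A, w ≠ [] →
    Filter.Tendsto (fun n => (occCount x w n : ℝ) / n) Filter.atTop
      (nhds (1 / (Fintype.card A : ℝ) ^ w.length))

namespace RunFreq

/-! ### log-sum inequality -/

lemma log_diff {Sa Sb a b : ℝ} (hSa : 0 < Sa) (hSb : 0 < Sb) (hapos : 0 < a) (hbpos : 0 < b) :
    Real.log (a / b) - Real.log (Sa / Sb) = - Real.log ((b * Sa) / (a * Sb)) := by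
  rw [Real.log_div (ne_of_gt hapos) (ne_of_gt hbpos),
    Real.log_div (ne_of_gt hSa) (ne_of_gt hSb),
    Real.log_div (by positivity : b * Sa ≠ 0) (by positivity : a * Sb ≠ 0),
    Real.log_mul (ne_of_gt hbpos) (ne_of_gt hSa),
    Real.log_mul (ne_of_gt hapos) (ne_of_gt hSb)]
  ring

/-- pointwise bound used in the log-sum inequality. -/
lemma logsum_term {Sa Sb : ℝ} (hSa : 0 < Sa) (hSb : 0 < Sb) {a b : ℝ}
    (ha : 0 ≤ a) (hb : 0 ≤ b) (hab : b = 0 → a = 0) :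
    a - b * (Sa / Sb) ≤ a * Real.log (a / b) - a * Real.log (Sa / Sb) := by
  rcases eq_or_lt_of_le ha with h0 | hapos
  · rw [← h0]
    simp
    positivity
  · have hbpos : 0 < b := lt_of_le_of_ne hb (fun h => by
      have := hab h.symm; exact absurd this.symm (ne_of_lt hapos))
    have hkey : Real.log ((b * Sa) / (a * Sb)) ≤ (b * Sa) / (a * Sb) - 1 :=
      Real.log_le_sub_one_of_pos (by positivity)
    have hlog : a * Real.log (a / b) - a * Real.log (Sa / Sb)
        = - (a * Real.log ((b * Sa) / (a * Sb))) := by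
      rw [← mul_sub, log_diff hSa hSb hapos hbpos]
      ring
    rw [hlog]
    have h2 := mul_le_mul_of_nonneg_left hkey (le_of_lt hapos)
    have harith : a * ((b * Sa) / (a * Sb) - 1) = b * (Sa / Sb) - a := by
      field_simp
    nlinarith [h2]

/-- log-sum inequality. -/
lemma logsum {ι : Type*} (S : Finset ι) (a b : ι → ℝ)
    (ha : ∀ i ∈ S, 0 ≤ a i) (hb : ∀ i ∈ S, 0 ≤ b i)
    (hab : ∀ i ∈ S, b i = 0 → a i = 0) :
    (∑ i ∈ S, a i) * Real.log ((∑ i ∈ S, a i) / (∑ i ∈ S, b i))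
      ≤ ∑ i ∈ S, a i * Real.log (a i / b i) := by
  classical
  rcases eq_or_lt_of_le (Finset.sum_nonneg ha) with h0 | hSapos
  · have hz := (Finset.sum_eq_zero_iff_of_nonneg ha).mp h0.symm
    rw [← h0, zero_mul]
    refine Finset.sum_nonneg fun i hi => ?_
    rw [hz i hi]
    simp
  · have hSbpos : 0 < ∑ i ∈ S, b i := by
      rcases eq_or_lt_of_le (Finset.sum_nonneg hb) with h0b | h
      · exfalso
        have hzb := (Finset.sum_eq_zero_iff_of_nonneg hb).mp h0b.symm
        have hz : (∑ i ∈ S, a i) = 0 := Finset.sum_eq_zero fun i hi => hab i hi (hzb i hi)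
        exact absurd hz (ne_of_gt hSapos)
      · exact h
    have key : ∀ i ∈ S, a i - b i * ((∑ i ∈ S, a i) / (∑ i ∈ S, b i)) ≤
        a i * Real.log (a i / b i) - a i * Real.log ((∑ i ∈ S, a i) / (∑ i ∈ S, b i)) :=
      fun i hi => logsum_term hSapos hSbpos (ha i hi) (hb i hi) (hab i hi)
    have hsum := Finset.sum_le_sum key
    rw [Finset.sum_sub_distrib, Finset.sum_sub_distrib, ← Finset.sum_mul, ← Finset.sum_mul]
      at hsum
    have h0 : (∑ i ∈ S, a i) - (∑ i ∈ S, b i) * ((∑ i ∈ S, a i) / (∑ i ∈ S, b i)) = 0 := by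
      field_simp
      ring
    linarith [hsum]

/-- equality case of the log-sum inequality. -/
lemma logsum_eq {ι : Type*} (S : Finset ι) (a b : ι → ℝ)
    (ha : ∀ i ∈ S, 0 ≤ a i) (hb : ∀ i ∈ S, 0 ≤ b i)
    (hab : ∀ i ∈ S, b i = 0 → a i = 0)
    (heq : (∑ i ∈ S, a i) * Real.log ((∑ i ∈ S, a i) / (∑ i ∈ S, b i))
      = ∑ i ∈ S, a i * Real.log (a i / b i)) :
    ∀ i ∈ S, a i * (∑ j ∈ S, b j) = b i * (∑ j ∈ S, a j) := by
  classical
  rcases eq_or_lt_of_le (Finset.sum_nonneg ha) with h0 | hSapos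
  · intro i hi
    have hz := (Finset.sum_eq_zero_iff_of_nonneg ha).mp h0.symm
    rw [hz i hi, ← h0]
    ring
  · have hSbpos : 0 < ∑ i ∈ S, b i := by
      rcases eq_or_lt_of_le (Finset.sum_nonneg hb) with h0b | h
      · exfalso
        have hzb := (Finset.sum_eq_zero_iff_of_nonneg hb).mp h0b.symm
        have hz : (∑ i ∈ S, a i) = 0 := Finset.sum_eq_zero fun i hi => hab i hi (hzb i hi)
        exact absurd hz (ne_of_gt hSapos)
      · exact h
    have key : ∀ i ∈ S, a i - b i * ((∑ i ∈ S, a i) / (∑ i ∈ S, b i)) ≤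
        a i * Real.log (a i / b i) - a i * Real.log ((∑ i ∈ S, a i) / (∑ i ∈ S, b i)) :=
      fun i hi => logsum_term hSapos hSbpos (ha i hi) (hb i hi) (hab i hi)
    have hzero : ∀ i ∈ S, (a i * Real.log (a i / b i)
        - a i * Real.log ((∑ i ∈ S, a i) / (∑ i ∈ S, b i)))
        - (a i - b i * ((∑ i ∈ S, a i) / (∑ i ∈ S, b i))) = 0 := by
      have hsum0 : ∑ i ∈ S, ((a i * Real.log (a i / b i)
          - a i * Real.log ((∑ i ∈ S, a i) / (∑ i ∈ S, b i)))
          - (a i - b i * ((∑ i ∈ S, a i) / (∑ i ∈ S, b i)))) = 0 := by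
        rw [Finset.sum_sub_distrib, Finset.sum_sub_distrib, Finset.sum_sub_distrib,
          ← Finset.sum_mul, ← Finset.sum_mul]
        have h1 : (∑ i ∈ S, a i) - (∑ i ∈ S, b i) * ((∑ i ∈ S, a i) / (∑ i ∈ S, b i)) = 0 := by
          field_simp
          ring
        nlinarith [heq, h1]
      intro i hi
      exact (Finset.sum_eq_zero_iff_of_nonneg (fun i hi => by
        have := key i hi; linarith)).mp hsum0 i hi
    intro i hi
    have hz := hzero i hi
    rcases eq_or_lt_of_le (ha i hi) with h0a | hapos
    · rw [← h0a] at hz ⊢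
      have hb0 : b i * ((∑ i ∈ S, a i) / (∑ i ∈ S, b i)) = 0 := by
        simp only [zero_mul, sub_zero, zero_sub, neg_eq_zero, sub_self] at hz
        linarith [hz]
      have hbz : b i = 0 := by
        by_contra hbn
        have hbp : 0 < b i := lt_of_le_of_ne (hb i hi) (Ne.symm hbn)
        have : 0 < b i * ((∑ i ∈ S, a i) / (∑ i ∈ S, b i)) := by positivity
        linarith
      rw [hbz]
      ring
    · have hbpos : 0 < b i := lt_of_le_of_ne (hb i hi) (fun h => by
        have := hab i hi h.symm; exact absurd this.symm (ne_of_lt hapos))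
      by_contra hne
      have hr : (b i * (∑ j ∈ S, a j)) / (a i * (∑ j ∈ S, b j)) ≠ 1 := by
        intro h1
        apply hne
        have h2 : a i * (∑ j ∈ S, b j) ≠ 0 := by positivity
        field_simp at h1
        linarith [h1]
      have hstrict := Real.log_lt_sub_one_of_pos
        (x := (b i * (∑ j ∈ S, a j)) / (a i * (∑ j ∈ S, b j))) (by positivity) hr
      have hlog : a i * Real.log (a i / b i)
          - a i * Real.log ((∑ j ∈ S, a j) / (∑ j ∈ S, b j))
          = - (a i * Real.log ((b i * (∑ j ∈ S, a j)) / (a i * (∑ j ∈ S, b j)))) := by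
        rw [← mul_sub, log_diff hSapos hSbpos hapos hbpos]
        ring
      have hmul := mul_lt_mul_of_pos_left hstrict hapos
      have harith : a i * ((b i * (∑ j ∈ S, a j)) / (a i * (∑ j ∈ S, b j)) - 1)
          = b i * ((∑ j ∈ S, a j) / (∑ j ∈ S, b j)) - a i := by
        field_simp
      rw [harith] at hmul
      rw [hlog] at hz
      nlinarith [hmul, hz]

/-! ### patterns and extensions -/

section Pat

variable {Q A : Type*} [Fintype Q] [DecidableEq Q] [Fintype A] [DecidableEq A]

def rext {k : ℕ} (δ : (Fin (k+1) → Q) × (Fin k → A)) (z : A × Q) :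
    (Fin (k+2) → Q) × (Fin (k+1) → A) :=
  (Fin.snoc δ.1 z.2, Fin.snoc δ.2 z.1)

def lext {k : ℕ} (z : Q × A) (δ : (Fin (k+1) → Q) × (Fin k → A)) :
    (Fin (k+2) → Q) × (Fin (k+1) → A) :=
  (Fin.cons z.1 δ.1, Fin.cons z.2 δ.2)

def IsRunPat (Δ : Q → A → Q → Prop) {k : ℕ} (δ : (Fin (k+1) → Q) × (Fin k → A)) : Prop :=
  ∀ j : Fin k, Δ (δ.1 j.castSucc) (δ.2 j) (δ.1 j.succ)

lemma cons_snoc_comm {X : Type*} {n : ℕ} (c d : X) (f : Fin n → X) :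
    (Fin.cons c (Fin.snoc f d : Fin (n+1) → X) : Fin (n+2) → X)
      = Fin.snoc (Fin.cons c f : Fin (n+1) → X) d := by
  funext j
  refine Fin.lastCases ?_ (fun i => ?_) j
  · rw [Fin.snoc_last]
    have h : Fin.last (n+1) = (Fin.last n).succ := rfl
    rw [h, Fin.cons_succ, Fin.snoc_last]
  · rw [Fin.snoc_castSucc]
    refine Fin.cases ?_ (fun i' => ?_) i
    · rw [Fin.castSucc_zero, Fin.cons_zero, Fin.cons_zero]
    · rw [← Fin.succ_castSucc, Fin.cons_succ, Fin.cons_succ, Fin.snoc_castSucc]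

lemma rext_lext_comm {k : ℕ} (δ : (Fin (k+1) → Q) × (Fin k → A)) (z : A × Q) (z' : Q × A) :
    rext (lext z' δ) z = lext z' (rext δ z) := by
  unfold rext lext
  dsimp
  rw [cons_snoc_comm, cons_snoc_comm]

def rextEquiv (Q A : Type*) (k : ℕ) :
    (((Fin (k+1) → Q) × (Fin k → A)) × (A × Q)) ≃ ((Fin (k+2) → Q) × (Fin (k+1) → A)) where
  toFun p := rext p.1 p.2
  invFun δ := (((Fin.init δ.1, Fin.init δ.2)), (δ.2 (Fin.last k), δ.1 (Fin.last (k+1))))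
  left_inv p := by
    unfold rext
    simp [Fin.snoc_last, Fin.init_snoc]
  right_inv δ := by
    unfold rext
    simp [Fin.snoc_init_self]

def lextEquiv (Q A : Type*) (k : ℕ) :
    ((Q × A) × ((Fin (k+1) → Q) × (Fin k → A))) ≃ ((Fin (k+2) → Q) × (Fin (k+1) → A)) where
  toFun p := lext p.1 p.2
  invFun δ := ((δ.1 0, δ.2 0), (Fin.tail δ.1, Fin.tail δ.2))
  left_inv p := by
    unfold lext
    simp [Fin.tail_cons]
  right_inv δ := by
    unfold lext
    simp [Fin.cons_self_tail]

lemma sum_rext {M : Type*} [AddCommMonoid M] {k : ℕ}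
    (f : ((Fin (k+2) → Q) × (Fin (k+1) → A)) → M) :
    (∑ δ' : (Fin (k+2) → Q) × (Fin (k+1) → A), f δ')
      = ∑ δ : (Fin (k+1) → Q) × (Fin k → A), ∑ z : A × Q, f (rext δ z) := by
  rw [← Equiv.sum_comp (rextEquiv Q A k) f, Fintype.sum_prod_type]
  rfl

lemma sum_lext {M : Type*} [AddCommMonoid M] {k : ℕ}
    (f : ((Fin (k+2) → Q) × (Fin (k+1) → A)) → M) :
    (∑ δ' : (Fin (k+2) → Q) × (Fin (k+1) → A), f δ')
      = ∑ δ : (Fin (k+1) → Q) × (Fin k → A), ∑ z : Q × A, f (lext z δ) := by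
  rw [← Equiv.sum_comp (lextEquiv Q A k) f, Fintype.sum_prod_type, Finset.sum_comm]
  rfl

lemma rext_fst_zero {k : ℕ} (δ : (Fin (k+1) → Q) × (Fin k → A)) (z : A × Q) :
    (rext δ z).1 0 = δ.1 0 := by
  show (Fin.snoc δ.1 z.2 : Fin (k+2) → Q) 0 = δ.1 0
  have h : (0 : Fin (k+2)) = Fin.castSucc 0 := rfl
  rw [h, Fin.snoc_castSucc]

lemma rext_fst_last {k : ℕ} (δ : (Fin (k+1) → Q) × (Fin k → A)) (z : A × Q) :
    (rext δ z).1 (Fin.last (k+1)) = z.2 := by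
  show (Fin.snoc δ.1 z.2 : Fin (k+2) → Q) (Fin.last (k+1)) = z.2
  rw [Fin.snoc_last]

lemma rext_fst_cast {k : ℕ} (δ : (Fin (k+1) → Q) × (Fin k → A)) (z : A × Q) (j : Fin (k+1)) :
    (rext δ z).1 j.castSucc = δ.1 j := by
  show (Fin.snoc δ.1 z.2 : Fin (k+2) → Q) j.castSucc = δ.1 j
  rw [Fin.snoc_castSucc]

lemma rext_snd_cast {k : ℕ} (δ : (Fin (k+1) → Q) × (Fin k → A)) (z : A × Q) (j : Fin k) :
    (rext δ z).2 j.castSucc = δ.2 j := by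
  show (Fin.snoc δ.2 z.1 : Fin (k+1) → A) j.castSucc = δ.2 j
  rw [Fin.snoc_castSucc]

lemma rext_snd_last {k : ℕ} (δ : (Fin (k+1) → Q) × (Fin k → A)) (z : A × Q) :
    (rext δ z).2 (Fin.last k) = z.1 := by
  show (Fin.snoc δ.2 z.1 : Fin (k+1) → A) (Fin.last k) = z.1
  rw [Fin.snoc_last]

lemma lext_fst_last {k : ℕ} (δ : (Fin (k+1) → Q) × (Fin k → A)) (z : Q × A) :
    (lext z δ).1 (Fin.last (k+1)) = δ.1 (Fin.last k) := by
  show (Fin.cons z.1 δ.1 : Fin (k+2) → Q) (Fin.last (k+1)) = δ.1 (Fin.last k)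
  have h : Fin.last (k+1) = (Fin.last k).succ := rfl
  rw [h, Fin.cons_succ]

lemma lext_fst_zero {k : ℕ} (δ : (Fin (k+1) → Q) × (Fin k → A)) (z : Q × A) :
    (lext z δ).1 0 = z.1 := by
  show (Fin.cons z.1 δ.1 : Fin (k+2) → Q) 0 = z.1
  rw [Fin.cons_zero]

lemma rext_not_run {Δ : Q → A → Q → Prop} {k : ℕ} {δ : (Fin (k+1) → Q) × (Fin k → A)}
    {z : A × Q} (h : ¬ Δ (δ.1 (Fin.last k)) z.1 z.2) : ¬ IsRunPat Δ (rext δ z) := by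
  intro hr
  have hj := hr (Fin.last k)
  apply h
  rw [rext_fst_cast, rext_snd_last] at hj
  have h3 : (Fin.last k).succ = Fin.last (k+1) := rfl
  rw [h3, rext_fst_last] at hj
  exact hj

lemma run_rext_last {Δ : Q → A → Q → Prop} {k : ℕ} {δ : (Fin (k+1) → Q) × (Fin k → A)}
    {z : A × Q} (h : IsRunPat Δ (rext δ z)) : Δ (δ.1 (Fin.last k)) z.1 z.2 := by
  by_contra hn
  exact rext_not_run hn h

lemma run_rext_init {Δ : Q → A → Q → Prop} {k : ℕ} {δ : (Fin (k+1) → Q) × (Fin k → A)}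
    {z : A × Q} (h : IsRunPat Δ (rext δ z)) : IsRunPat Δ δ := by
  intro j
  have hj := h j.castSucc
  rw [rext_snd_cast] at hj
  rw [rext_fst_cast] at hj
  rw [Fin.succ_castSucc, rext_fst_cast] at hj
  exact hj

lemma pat_eq_rext {k : ℕ} (δ' : (Fin (k+2) → Q) × (Fin (k+1) → A)) :
    δ' = rext (Fin.init δ'.1, Fin.init δ'.2) (δ'.2 (Fin.last k), δ'.1 (Fin.last (k+1))) :=
  ((rextEquiv Q A k).right_inv δ').symm

end Pat

/-! ### the abstract uniqueness argument -/

section Abstract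

variable {Q A : Type*} [Fintype Q] [DecidableEq Q] [Fintype A] [DecidableEq A] [Nonempty A]

noncomputable def Pw (Δ : Q → A → Q → Prop) [∀ p a q, Decidable (Δ p a q)] (α : Q → ℝ) (r : Q) (z : A × Q) :
    ℝ :=
  if Δ r z.1 z.2 then α z.2 / (α r * (Fintype.card A : ℝ)) else 0

variable (Δ : Q → A → Q → Prop) [∀ p a q, Decidable (Δ p a q)] (α : Q → ℝ)
variable (F : ∀ k : ℕ, ((Fin (k+1) → Q) × (Fin k → A)) → ℝ)

lemma hKpos : (0:ℝ) < Fintype.card A := by exact_mod_cast Fintype.card_pos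

lemma Pw_nonneg (hαpos : ∀ q, 0 < α q) (r : Q) (z : A × Q) : 0 ≤ Pw Δ α r z := by
  unfold Pw
  split
  · have h1 := hαpos z.2
    have h2 := hαpos r
    have h3 : (0:ℝ) < Fintype.card A := hKpos
    positivity
  · exact le_refl 0

lemma Pw_pos (hαpos : ∀ q, 0 < α q) {r : Q} {z : A × Q} (h : Δ r z.1 z.2) :
    0 < Pw Δ α r z := by
  unfold Pw
  rw [if_pos h]
  have h1 := hαpos z.2
  have h2 := hαpos r
  have h3 : (0:ℝ) < Fintype.card A := hKpos
  positivity

lemma Pw_eq_zero_iff (hαpos : ∀ q, 0 < α q) {r : Q} {z : A × Q} :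
    Pw Δ α r z = 0 ↔ ¬ Δ r z.1 z.2 := by
  constructor
  · intro h hd
    exact absurd h (ne_of_gt (Pw_pos Δ α hαpos hd))
  · intro h
    unfold Pw
    rw [if_neg h]

/-- total transition weight is 1. -/
lemma Pw_sum (hαpos : ∀ q, 0 < α q) (M : Matrix Q Q ℝ)
    (hM : ∀ p q, M p q =
      ((Finset.univ.filter (fun a : A => Δ p a q)).card : ℝ) / Fintype.card A)
    (hright : M *ᵥ α = α) (r : Q) :
    ∑ z : A × Q, Pw Δ α r z = 1 := by
  have hK : (0:ℝ) < Fintype.card A := hKpos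
  have hsum : ∑ z : A × Q, Pw Δ α r z
      = ∑ q : Q, ((Finset.univ.filter (fun a : A => Δ r a q)).card : ℝ)
          * (α q / (α r * Fintype.card A)) := by
    rw [Fintype.sum_prod_type, Finset.sum_comm]
    refine Finset.sum_congr rfl fun q _ => ?_
    unfold Pw
    dsimp only
    rw [← Finset.sum_filter, Finset.sum_const, nsmul_eq_mul]
  rw [hsum]
  have hMv := congrFun hright r
  have hmv : (M *ᵥ α) r = ∑ q, M r q * α q := by
    simp [Matrix.mulVec, dotProduct]
  rw [hmv] at hMv
  have hc : ∀ q : Q, ((Finset.univ.filter (fun a : A => Δ r a q)).card : ℝ)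
      = M r q * Fintype.card A := by
    intro q
    rw [hM r q]
    field_simp
  calc ∑ q : Q, ((Finset.univ.filter (fun a : A => Δ r a q)).card : ℝ)
        * (α q / (α r * Fintype.card A))
      = ∑ q : Q, (M r q * α q) / α r := by
        refine Finset.sum_congr rfl fun q _ => ?_
        rw [hc q]
        have hα := hαpos r
        field_simp
    _ = (∑ q : Q, M r q * α q) / α r := by rw [Finset.sum_div]
    _ = 1 := by
        rw [hMv]
        have hα := hαpos r
        field_simp

section WithF

noncomputable def Ssum (k : ℕ) : ℝ := ∑ δ : (Fin (k+1) → Q) × (Fin k → A), F k δ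
noncomputable def Lent (k : ℕ) : ℝ := ∑ δ : (Fin (k+1) → Q) × (Fin k → A), F k δ * Real.log (F k δ)
noncomputable def Eal (k : ℕ) : ℝ :=
  ∑ δ : (Fin (k+1) → Q) × (Fin k → A), F k δ * Real.log (α (δ.1 (Fin.last k)))
noncomputable def Gd (k : ℕ) (δ : (Fin (k+1) → Q) × (Fin k → A)) : ℝ :=
  ∑ z : A × Q, F (k+1) (rext δ z) *
    Real.log (F (k+1) (rext δ z) / (F k δ * Pw Δ α (δ.1 (Fin.last k)) z))
noncomputable def AA (k : ℕ) : ℝ := ∑ δ : (Fin (k+1) → Q) × (Fin k → A), Gd Δ α F k δ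

lemma F_mono (hF0 : ∀ k δ, 0 ≤ F k δ)
    (hFr : ∀ k δ, F k δ = ∑ z : A × Q, F (k+1) (rext δ z)) (k : ℕ) (δ : (Fin (k+1) → Q) × (Fin k → A)) (z : A × Q) :
    F (k+1) (rext δ z) ≤ F k δ := by
  rw [hFr k δ]
  exact Finset.single_le_sum (fun z' _ => hF0 (k+1) (rext δ z')) (Finset.mem_univ z)

lemma Ssum_succ (hFr : ∀ k δ, F k δ = ∑ z : A × Q, F (k+1) (rext δ z)) (k : ℕ) : Ssum F (k+1) = Ssum F k := by
  unfold Ssum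
  rw [sum_rext]
  exact (Finset.sum_congr rfl fun δ _ => (hFr k δ).symm)

lemma Ssum_one (hFr : ∀ k δ, F k δ = ∑ z : A × Q, F (k+1) (rext δ z))
    (hFw : ∀ k, 0 < k → ∀ w : Fin k → A,
      (∑ g : Fin (k+1) → Q, F k (g, w)) = 1 / (Fintype.card A : ℝ) ^ k) : ∀ k, Ssum F k = 1 := by
  have h1 : Ssum F 1 = 1 := by
    unfold Ssum
    rw [Fintype.sum_prod_type, Finset.sum_comm]
    have : ∀ w : Fin 1 → A, (∑ g : Fin 2 → Q, F 1 (g, w)) = 1 / (Fintype.card A : ℝ) := by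
      intro w
      have := hFw 1 one_pos w
      simpa using this
    rw [Finset.sum_congr rfl (fun w _ => this w), Finset.sum_const, nsmul_eq_mul]
    have hcard : (Fintype.card (Fin 1 → A) : ℝ) = Fintype.card A := by
      rw [Fintype.card_fun]
      simp
    simp only [Finset.card_univ]
    rw [hcard]
    have hK : (0:ℝ) < Fintype.card A := hKpos
    field_simp
  intro k
  induction k with
  | zero => rw [← Ssum_succ F hFr 0]; exact h1
  | succ k ih => rw [Ssum_succ F hFr k]; exact ih

lemma Eal_succ (hFl : ∀ k δ, F k δ = ∑ z : Q × A, F (k+1) (lext z δ)) (k : ℕ) : Eal α F (k+1) = Eal α F k := by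
  unfold Eal
  rw [sum_lext]
  have h : ∀ δ : (Fin (k+1) → Q) × (Fin k → A), ∀ z : Q × A,
      F (k+1) (lext z δ) * Real.log (α ((lext z δ).1 (Fin.last (k+1))))
        = F (k+1) (lext z δ) * Real.log (α (δ.1 (Fin.last k))) := by
    intro δ z
    rw [lext_fst_last]
  calc ∑ δ : (Fin (k+1) → Q) × (Fin k → A), ∑ z : Q × A,
        F (k+1) (lext z δ) * Real.log (α ((lext z δ).1 (Fin.last (k+1))))
      = ∑ δ : (Fin (k+1) → Q) × (Fin k → A), ∑ z : Q × A,
        F (k+1) (lext z δ) * Real.log (α (δ.1 (Fin.last k))) := by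
        exact Finset.sum_congr rfl fun δ _ => Finset.sum_congr rfl fun z _ => h δ z
    _ = ∑ δ : (Fin (k+1) → Q) × (Fin k → A),
        F k δ * Real.log (α (δ.1 (Fin.last k))) := by
        refine Finset.sum_congr rfl fun δ _ => ?_
        rw [← Finset.sum_mul, ← hFl k δ]

lemma Gd_support (hF0 : ∀ k δ, 0 ≤ F k δ)
    (hFnr : ∀ k δ, ¬ IsRunPat Δ δ → F k δ = 0)
    (hFr : ∀ k δ, F k δ = ∑ z : A × Q, F (k+1) (rext δ z)) (hαpos : ∀ q, 0 < α q) (k : ℕ) (δ : (Fin (k+1) → Q) × (Fin k → A)) :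
    ∀ z : A × Q, F k δ * Pw Δ α (δ.1 (Fin.last k)) z = 0 → F (k+1) (rext δ z) = 0 := by
  intro z h
  rcases mul_eq_zero.mp h with h | h
  · exact le_antisymm (h ▸ F_mono F hF0 hFr k δ z) (hF0 _ _)
  · exact hFnr (k+1) (rext δ z) (rext_not_run ((Pw_eq_zero_iff Δ α hαpos).mp h))

lemma Gd_nonneg (hF0 : ∀ k δ, 0 ≤ F k δ)
    (hFnr : ∀ k δ, ¬ IsRunPat Δ δ → F k δ = 0)
    (hFr : ∀ k δ, F k δ = ∑ z : A × Q, F (k+1) (rext δ z)) (hαpos : ∀ q, 0 < α q)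
    (hPsum : ∀ r, ∑ z : A × Q, Pw Δ α r z = 1)
    (k : ℕ) (δ : (Fin (k+1) → Q) × (Fin k → A)) : 0 ≤ Gd Δ α F k δ := by
  have hls := logsum Finset.univ (fun z : A × Q => F (k+1) (rext δ z))
    (fun z : A × Q => F k δ * Pw Δ α (δ.1 (Fin.last k)) z)
    (fun z _ => hF0 _ _)
    (fun z _ => mul_nonneg (hF0 _ _) (Pw_nonneg Δ α hαpos _ _))
    (fun z _ h => Gd_support Δ α F hF0 hFnr hFr hαpos k δ z h)
  have hsa : ∑ z : A × Q, F (k+1) (rext δ z) = F k δ := (hFr k δ).symm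
  have hsb : ∑ z : A × Q, F k δ * Pw Δ α (δ.1 (Fin.last k)) z = F k δ := by
    rw [← Finset.mul_sum, hPsum, mul_one]
  rw [hsa, hsb] at hls
  have h0 : F k δ * Real.log (F k δ / F k δ) = 0 := by
    rcases eq_or_lt_of_le (hF0 k δ) with h | h
    · rw [← h, zero_mul]
    · rw [div_self (ne_of_gt h), Real.log_one, mul_zero]
  rw [h0] at hls
  exact le_trans (le_of_eq rfl) hls

lemma AA_mono (hF0 : ∀ k δ, 0 ≤ F k δ)
    (hFnr : ∀ k δ, ¬ IsRunPat Δ δ → F k δ = 0)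
    (hFr : ∀ k δ, F k δ = ∑ z : A × Q, F (k+1) (rext δ z))
    (hFl : ∀ k δ, F k δ = ∑ z : Q × A, F (k+1) (lext z δ)) (hαpos : ∀ q, 0 < α q) (k : ℕ) :
    AA Δ α F k ≤ AA Δ α F (k+1) := by
  unfold AA
  rw [sum_lext (f := fun δ' => Gd Δ α F (k+1) δ')]
  refine Finset.sum_le_sum fun δ _ => ?_
  unfold Gd
  rw [Finset.sum_comm]
  refine Finset.sum_le_sum fun z _ => ?_
  -- fixed δ, z; sum over z' : Q × A
  have hcomm : ∀ z' : Q × A, rext (lext z' δ) z = lext z' (rext δ z) := fun z' =>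
    rext_lext_comm δ z z'
  have hend : ∀ z' : Q × A, (lext z' δ).1 (Fin.last (k+1)) = δ.1 (Fin.last k) := fun z' =>
    lext_fst_last δ z'
  have hls := logsum Finset.univ
    (fun z' : Q × A => F (k+2) (lext z' (rext δ z)))
    (fun z' : Q × A => F (k+1) (lext z' δ) * Pw Δ α (δ.1 (Fin.last k)) z)
    (fun z' _ => hF0 _ _)
    (fun z' _ => mul_nonneg (hF0 _ _) (Pw_nonneg Δ α hαpos _ _))
    (fun z' _ h => by
      rcases mul_eq_zero.mp h with h | h
      · rw [← hcomm z']
        refine le_antisymm ?_ (hF0 _ _)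
        have hle := F_mono F hF0 hFr (k+1) (lext z' δ) z
        rw [h] at hle
        exact hle
      · rw [← hcomm z']
        refine hFnr (k+2) _ (rext_not_run ?_)
        rw [hend z']
        exact (Pw_eq_zero_iff Δ α hαpos).mp h)
  have hsa : ∑ z' : Q × A, F (k+2) (lext z' (rext δ z)) = F (k+1) (rext δ z) :=
    (hFl (k+1) (rext δ z)).symm
  have hsb : ∑ z' : Q × A, F (k+1) (lext z' δ) * Pw Δ α (δ.1 (Fin.last k)) z
      = F k δ * Pw Δ α (δ.1 (Fin.last k)) z := by
    rw [← Finset.sum_mul, ← hFl k δ]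
  rw [hsa, hsb] at hls
  refine le_trans hls (le_of_eq ?_)
  refine Finset.sum_congr rfl fun z' _ => ?_
  rw [hcomm z', hend z']

lemma AA_eq (hF0 : ∀ k δ, 0 ≤ F k δ)
    (hFnr : ∀ k δ, ¬ IsRunPat Δ δ → F k δ = 0)
    (hFr : ∀ k δ, F k δ = ∑ z : A × Q, F (k+1) (rext δ z))
    (hαpos : ∀ q, 0 < α q) (k : ℕ) :
    AA Δ α F k = Lent F (k+1) - Lent F k - Eal α F (k+1) + Eal α F k
      + Ssum F k * Real.log (Fintype.card A) := by
  have hK : (0:ℝ) < Fintype.card A := hKpos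
  have hpt : ∀ (δ : (Fin (k+1) → Q) × (Fin k → A)) (z : A × Q),
      F (k+1) (rext δ z) *
        Real.log (F (k+1) (rext δ z) / (F k δ * Pw Δ α (δ.1 (Fin.last k)) z))
      = F (k+1) (rext δ z) * Real.log (F (k+1) (rext δ z))
        - F (k+1) (rext δ z) * Real.log (F k δ)
        - F (k+1) (rext δ z) * Real.log (α z.2)
        + F (k+1) (rext δ z) * Real.log (α (δ.1 (Fin.last k)))
        + F (k+1) (rext δ z) * Real.log (Fintype.card A) := by
    intro δ z
    rcases eq_or_lt_of_le (hF0 (k+1) (rext δ z)) with h | h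
    · rw [← h]
      ring
    · have hrun : IsRunPat Δ (rext δ z) := by
        by_contra hn
        exact absurd (hFnr (k+1) (rext δ z) hn) (ne_of_gt h)
      have hΔ : Δ (δ.1 (Fin.last k)) z.1 z.2 := run_rext_last hrun
      have hFδ : 0 < F k δ := lt_of_lt_of_le h (F_mono F hF0 hFr k δ z)
      have hu := hαpos z.2
      have hv := hαpos (δ.1 (Fin.last k))
      have hPw : Pw Δ α (δ.1 (Fin.last k)) z
          = α z.2 / (α (δ.1 (Fin.last k)) * Fintype.card A) := by
        unfold Pw
        rw [if_pos hΔ]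
      rw [hPw]
      rw [Real.log_div (ne_of_gt h) (by positivity),
        Real.log_mul (ne_of_gt hFδ) (by positivity),
        Real.log_div (ne_of_gt hu) (by positivity),
        Real.log_mul (ne_of_gt hv) (ne_of_gt hK)]
      ring
  have hstep : AA Δ α F k
      = (∑ δ : (Fin (k+1) → Q) × (Fin k → A), ∑ z : A × Q,
          F (k+1) (rext δ z) * Real.log (F (k+1) (rext δ z)))
        - (∑ δ : (Fin (k+1) → Q) × (Fin k → A), ∑ z : A × Q,
          F (k+1) (rext δ z) * Real.log (F k δ))
        - (∑ δ : (Fin (k+1) → Q) × (Fin k → A), ∑ z : A × Q,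
          F (k+1) (rext δ z) * Real.log (α z.2))
        + (∑ δ : (Fin (k+1) → Q) × (Fin k → A), ∑ z : A × Q,
          F (k+1) (rext δ z) * Real.log (α (δ.1 (Fin.last k))))
        + (∑ δ : (Fin (k+1) → Q) × (Fin k → A), ∑ z : A × Q,
          F (k+1) (rext δ z) * Real.log (Fintype.card A)) := by
    unfold AA Gd
    rw [Finset.sum_congr rfl (fun δ _ => Finset.sum_congr rfl (fun z _ => hpt δ z))]
    simp only [Finset.sum_add_distrib, Finset.sum_sub_distrib]
  rw [hstep]
  have e1 : (∑ δ : (Fin (k+1) → Q) × (Fin k → A), ∑ z : A × Q,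
      F (k+1) (rext δ z) * Real.log (F (k+1) (rext δ z))) = Lent F (k+1) := by
    unfold Lent
    rw [sum_rext (f := fun δ' => F (k+1) δ' * Real.log (F (k+1) δ'))]
  have e2 : (∑ δ : (Fin (k+1) → Q) × (Fin k → A), ∑ z : A × Q,
      F (k+1) (rext δ z) * Real.log (F k δ)) = Lent F k := by
    unfold Lent
    refine Finset.sum_congr rfl fun δ _ => ?_
    rw [← Finset.sum_mul, ← hFr k δ]
  have e3 : (∑ δ : (Fin (k+1) → Q) × (Fin k → A), ∑ z : A × Q,
      F (k+1) (rext δ z) * Real.log (α z.2)) = Eal α F (k+1) := by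
    unfold Eal
    rw [sum_rext (f := fun δ' => F (k+1) δ' * Real.log (α (δ'.1 (Fin.last (k+1)))))]
    refine Finset.sum_congr rfl fun δ _ => Finset.sum_congr rfl fun z _ => ?_
    rw [rext_fst_last]
  have e4 : (∑ δ : (Fin (k+1) → Q) × (Fin k → A), ∑ z : A × Q,
      F (k+1) (rext δ z) * Real.log (α (δ.1 (Fin.last k)))) = Eal α F k := by
    unfold Eal
    refine Finset.sum_congr rfl fun δ _ => ?_
    rw [← Finset.sum_mul, ← hFr k δ]
  have e5 : (∑ δ : (Fin (k+1) → Q) × (Fin k → A), ∑ z : A × Q,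
      F (k+1) (rext δ z) * Real.log (Fintype.card A))
      = Ssum F k * Real.log (Fintype.card A) := by
    unfold Ssum
    rw [Finset.sum_mul]
    refine Finset.sum_congr rfl fun δ _ => ?_
    rw [← Finset.sum_mul, ← hFr k δ]
  rw [e1, e2, e3, e4, e5]

lemma Lent_le (hF0 : ∀ k δ, 0 ≤ F k δ)
    (hFw : ∀ k, 0 < k → ∀ w : Fin k → A,
      (∑ g : Fin (k+1) → Q, F k (g, w)) = 1 / (Fintype.card A : ℝ) ^ k)
    (k : ℕ) (hk : 0 < k) :
    Lent F k ≤ -(k * Real.log (Fintype.card A)) := by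
  have hK : (0:ℝ) < Fintype.card A := hKpos
  have hKk : (0:ℝ) < (Fintype.card A : ℝ) ^ k := by positivity
  unfold Lent
  rw [Fintype.sum_prod_type, Finset.sum_comm]
  have hbnd : ∀ w : Fin k → A, ∑ g : Fin (k+1) → Q, F k (g, w) * Real.log (F k (g, w))
      ≤ (1 / (Fintype.card A : ℝ) ^ k) * Real.log (1 / (Fintype.card A : ℝ) ^ k) := by
    intro w
    have hle : ∀ g : Fin (k+1) → Q, F k (g, w) ≤ 1 / (Fintype.card A : ℝ) ^ k := by
      intro g
      rw [← hFw k hk w]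
      exact Finset.single_le_sum (fun g' _ => hF0 k (g', w)) (Finset.mem_univ g)
    have hterm : ∀ g : Fin (k+1) → Q, F k (g, w) * Real.log (F k (g, w))
        ≤ F k (g, w) * Real.log (1 / (Fintype.card A : ℝ) ^ k) := by
      intro g
      rcases eq_or_lt_of_le (hF0 k (g, w)) with h | h
      · rw [← h, zero_mul, zero_mul]
      · exact mul_le_mul_of_nonneg_left (Real.log_le_log h (hle g)) (le_of_lt h)
    calc ∑ g : Fin (k+1) → Q, F k (g, w) * Real.log (F k (g, w))
        ≤ ∑ g : Fin (k+1) → Q, F k (g, w) * Real.log (1 / (Fintype.card A : ℝ) ^ k) :=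
          Finset.sum_le_sum fun g _ => hterm g
      _ = (1 / (Fintype.card A : ℝ) ^ k) * Real.log (1 / (Fintype.card A : ℝ) ^ k) := by
          rw [← Finset.sum_mul, hFw k hk w]
  calc ∑ w : Fin k → A, ∑ g : Fin (k+1) → Q, F k (g, w) * Real.log (F k (g, w))
      ≤ ∑ w : Fin k → A,
        (1 / (Fintype.card A : ℝ) ^ k) * Real.log (1 / (Fintype.card A : ℝ) ^ k) :=
        Finset.sum_le_sum fun w _ => hbnd w
    _ = -(k * Real.log (Fintype.card A)) := by
        rw [Finset.sum_const, nsmul_eq_mul, Finset.card_univ]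
        have hcard : (Fintype.card (Fin k → A) : ℝ) = (Fintype.card A : ℝ) ^ k := by
          rw [Fintype.card_fun]
          simp
        rw [hcard]
        rw [one_div, Real.log_inv, Real.log_pow]
        field_simp

lemma AA_zero (hF0 : ∀ k δ, 0 ≤ F k δ)
    (hFnr : ∀ k δ, ¬ IsRunPat Δ δ → F k δ = 0)
    (hFr : ∀ k δ, F k δ = ∑ z : A × Q, F (k+1) (rext δ z))
    (hFl : ∀ k δ, F k δ = ∑ z : Q × A, F (k+1) (lext z δ))
    (hFw : ∀ k, 0 < k → ∀ w : Fin k → A,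
      (∑ g : Fin (k+1) → Q, F k (g, w)) = 1 / (Fintype.card A : ℝ) ^ k)
    (hαpos : ∀ q, 0 < α q)
    (hPsum : ∀ r, ∑ z : A × Q, Pw Δ α r z = 1) :
    ∀ j, AA Δ α F j = 0 := by
  have hnn : ∀ j, 0 ≤ AA Δ α F j := fun j =>
    Finset.sum_nonneg fun δ _ => Gd_nonneg Δ α F hF0 hFnr hFr hαpos hPsum j δ
  have hAAi : ∀ i, AA Δ α F i
      = (Lent F (i+1) - Lent F i) + Real.log (Fintype.card A) := by
    intro i
    rw [AA_eq Δ α F hF0 hFnr hFr hαpos i, Eal_succ α F hFl i,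
      Ssum_one F hFr hFw i]
    ring
  have hsum : ∀ k, (∑ i ∈ Finset.range k, AA Δ α F i)
      = Lent F k - Lent F 0 + k * Real.log (Fintype.card A) := by
    intro k
    rw [Finset.sum_congr rfl (fun i _ => hAAi i), Finset.sum_add_distrib,
      Finset.sum_range_sub (f := fun i => Lent F i), Finset.sum_const,
      Finset.card_range, nsmul_eq_mul]
  have hub : ∀ k, 0 < k → (∑ i ∈ Finset.range k, AA Δ α F i) ≤ - Lent F 0 := by
    intro k hk
    rw [hsum k]
    have := Lent_le F hF0 hFw k hk
    linarith
  intro j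
  by_contra hne
  have hpos : 0 < AA Δ α F j := lt_of_le_of_ne (hnn j) (Ne.symm hne)
  have hmono : ∀ i, j ≤ i → AA Δ α F j ≤ AA Δ α F i := by
    intro i hi
    induction i, hi using Nat.le_induction with
    | base => exact le_refl _
    | succ i hi ih => exact le_trans ih (AA_mono Δ α F hF0 hFnr hFr hFl hαpos i)
  obtain ⟨N, hN⟩ := exists_nat_gt ((- Lent F 0) / AA Δ α F j)
  set k := j + N + 1 with hkdef
  have hlow : (N : ℝ) * AA Δ α F j ≤ ∑ i ∈ Finset.range k, AA Δ α F i := by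
    have hsub : Finset.Ico j k ⊆ Finset.range k := by
      intro i hi
      rw [Finset.mem_range]
      exact (Finset.mem_Ico.mp hi).2
    have h1 : ∑ i ∈ Finset.Ico j k, AA Δ α F j ≤ ∑ i ∈ Finset.Ico j k, AA Δ α F i :=
      Finset.sum_le_sum fun i hi => hmono i (Finset.mem_Ico.mp hi).1
    have h2 : ∑ i ∈ Finset.Ico j k, AA Δ α F i ≤ ∑ i ∈ Finset.range k, AA Δ α F i :=
      Finset.sum_le_sum_of_subset_of_nonneg hsub (fun i _ _ => hnn i)
    have h3 : (∑ i ∈ Finset.Ico j k, AA Δ α F j) = ((N:ℝ) + 1) * AA Δ α F j := by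
      rw [Finset.sum_const, Nat.card_Ico, nsmul_eq_mul]
      congr 1
      have : k - j = N + 1 := by omega
      rw [this]
      push_cast
      ring
    rw [h3] at h1
    nlinarith [h1, h2, hpos]
  have hgt : - Lent F 0 < (N:ℝ) * AA Δ α F j := by
    rw [div_lt_iff₀ hpos] at hN
    linarith
  have := hub k (by omega)
  linarith

lemma F_step (hF0 : ∀ k δ, 0 ≤ F k δ)
    (hFnr : ∀ k δ, ¬ IsRunPat Δ δ → F k δ = 0)
    (hFr : ∀ k δ, F k δ = ∑ z : A × Q, F (k+1) (rext δ z))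
    (hFl : ∀ k δ, F k δ = ∑ z : Q × A, F (k+1) (lext z δ))
    (hFw : ∀ k, 0 < k → ∀ w : Fin k → A,
      (∑ g : Fin (k+1) → Q, F k (g, w)) = 1 / (Fintype.card A : ℝ) ^ k)
    (hαpos : ∀ q, 0 < α q)
    (hPsum : ∀ r, ∑ z : A × Q, Pw Δ α r z = 1)
    (k : ℕ) (δ : (Fin (k+1) → Q) × (Fin k → A)) (z : A × Q) (hpos : 0 < F k δ) :
    F (k+1) (rext δ z) = F k δ * Pw Δ α (δ.1 (Fin.last k)) z := by
  have hGd0 : Gd Δ α F k δ = 0 := by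
    have hA := AA_zero Δ α F hF0 hFnr hFr hFl hFw hαpos hPsum k
    exact (Finset.sum_eq_zero_iff_of_nonneg fun δ' _ =>
      Gd_nonneg Δ α F hF0 hFnr hFr hαpos hPsum k δ').mp hA δ (Finset.mem_univ δ)
  have hsa : ∑ z' : A × Q, F (k+1) (rext δ z') = F k δ := (hFr k δ).symm
  have hsb : ∑ z' : A × Q, F k δ * Pw Δ α (δ.1 (Fin.last k)) z' = F k δ := by
    rw [← Finset.mul_sum, hPsum, mul_one]
  have heq : (∑ z' : A × Q, F (k+1) (rext δ z'))
      * Real.log ((∑ z' : A × Q, F (k+1) (rext δ z'))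
        / (∑ z' : A × Q, F k δ * Pw Δ α (δ.1 (Fin.last k)) z'))
      = ∑ z' : A × Q, F (k+1) (rext δ z') *
          Real.log (F (k+1) (rext δ z') / (F k δ * Pw Δ α (δ.1 (Fin.last k)) z')) := by
    rw [hsa, hsb, div_self (ne_of_gt hpos), Real.log_one, mul_zero]
    exact hGd0.symm
  have := logsum_eq Finset.univ
    (fun z' : A × Q => F (k+1) (rext δ z'))
    (fun z' : A × Q => F k δ * Pw Δ α (δ.1 (Fin.last k)) z')
    (fun z' _ => hF0 _ _)
    (fun z' _ => mul_nonneg (hF0 _ _) (Pw_nonneg Δ α hαpos _ _))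
    (fun z' _ h => Gd_support Δ α F hF0 hFnr hFr hαpos k δ z' h)
    heq z (Finset.mem_univ z)
  rw [hsa, hsb] at this
  have := mul_right_cancel₀ (ne_of_gt hpos) (by
    rw [mul_comm (F k δ * Pw Δ α (δ.1 (Fin.last k)) z) (F k δ)] at this
    exact this.trans (by ring) : F (k+1) (rext δ z) * F k δ
      = (F k δ * Pw Δ α (δ.1 (Fin.last k)) z) * F k δ)
  exact this

def basePat (q : Q) : (Fin 1 → Q) × (Fin 0 → A) := (fun _ => q, fun j => j.elim0)

lemma pat_zero_eq (δ : (Fin 1 → Q) × (Fin 0 → A)) : δ = basePat (δ.1 0) := by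
  have h1 : δ.1 = fun _ => δ.1 0 := by
    funext j
    have : j = 0 := Subsingleton.elim j 0
    rw [this]
  have h2 : δ.2 = fun j : Fin 0 => j.elim0 := by
    funext j
    exact j.elim0
  unfold basePat
  rw [← h1, ← h2]

noncomputable def nuF (q : Q) : ℝ := F 0 (basePat q)

lemma F_formula (hF0 : ∀ k δ, 0 ≤ F k δ)
    (hFnr : ∀ k δ, ¬ IsRunPat Δ δ → F k δ = 0)
    (hFr : ∀ k δ, F k δ = ∑ z : A × Q, F (k+1) (rext δ z))
    (hFl : ∀ k δ, F k δ = ∑ z : Q × A, F (k+1) (lext z δ))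
    (hFw : ∀ k, 0 < k → ∀ w : Fin k → A,
      (∑ g : Fin (k+1) → Q, F k (g, w)) = 1 / (Fintype.card A : ℝ) ^ k)
    (hαpos : ∀ q, 0 < α q)
    (hPsum : ∀ r, ∑ z : A × Q, Pw Δ α r z = 1) :
    ∀ (k : ℕ) (δ : (Fin (k+1) → Q) × (Fin k → A)), IsRunPat Δ δ →
      F k δ = nuF F (δ.1 0) * α (δ.1 (Fin.last k))
        / (α (δ.1 0) * (Fintype.card A : ℝ) ^ k) := by
  have hK : (0:ℝ) < Fintype.card A := hKpos
  intro k
  induction k with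
  | zero =>
    intro δ _
    have h0 : Fin.last 0 = 0 := rfl
    rw [h0, pow_zero]
    have hα := hαpos (δ.1 0)
    have : F 0 δ = nuF F (δ.1 0) := by
      unfold nuF
      rw [← pat_zero_eq δ]
    rw [this]
    field_simp
  | succ k ih =>
    intro δ' hrun'
    have hδ'eq := pat_eq_rext δ'
    set δ : (Fin (k+1) → Q) × (Fin k → A) := (Fin.init δ'.1, Fin.init δ'.2) with hδdef
    set z : A × Q := (δ'.2 (Fin.last k), δ'.1 (Fin.last (k+1))) with hzdef
    have hrun2 : IsRunPat Δ (rext δ z) := by rw [← hδ'eq]; exact hrun'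
    have hrun : IsRunPat Δ δ := run_rext_init hrun2
    have hΔl : Δ (δ.1 (Fin.last k)) z.1 z.2 := run_rext_last hrun2
    have hstart : δ'.1 0 = δ.1 0 := by
      conv_lhs => rw [hδ'eq]
      rw [rext_fst_zero]
    have hend : δ'.1 (Fin.last (k+1)) = z.2 := rfl
    have hαp := hαpos (δ.1 0)
    have hαr := hαpos (δ.1 (Fin.last k))
    have hαq := hαpos z.2
    rcases eq_or_lt_of_le (hF0 k δ) with hz0 | hposδ
    · have hν : nuF F (δ.1 0) = 0 := by
        have hih := ih δ hrun
        rw [← hz0] at hih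
        have hKk : (0:ℝ) < (Fintype.card A : ℝ) ^ k := by positivity
        replace hih := (div_eq_zero_iff.mp hih.symm).resolve_right (by positivity)
        rcases mul_eq_zero.mp hih with h | h
        · exact h
        · exact absurd h (ne_of_gt hαr)
      have hF'0 : F (k+1) δ' = 0 := by
        refine le_antisymm ?_ (hF0 _ _)
        have hle : F (k+1) δ' ≤ F k δ := by
          conv_lhs => rw [hδ'eq]
          exact F_mono F hF0 hFr k δ z
        rw [← hz0] at hle
        exact hle
      rw [hF'0, hstart, hν]
      simp
    · have hstep := F_step Δ α F hF0 hFnr hFr hFl hFw hαpos hPsum k δ z hposδ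
      have hPw : Pw Δ α (δ.1 (Fin.last k)) z
          = α z.2 / (α (δ.1 (Fin.last k)) * Fintype.card A) := by
        unfold Pw
        rw [if_pos hΔl]
      have hih := ih δ hrun
      conv_lhs => rw [hδ'eq]
      rw [hstep, hih, hPw, hstart, hend, pow_succ]
      field_simp

lemma nuF_sum (hFr : ∀ k δ, F k δ = ∑ z : A × Q, F (k+1) (rext δ z))
    (hFw : ∀ k, 0 < k → ∀ w : Fin k → A,
      (∑ g : Fin (k+1) → Q, F k (g, w)) = 1 / (Fintype.card A : ℝ) ^ k) :
    ∑ q : Q, nuF F q = 1 := by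
  have h : ∑ q : Q, nuF F q = Ssum F 0 := by
    unfold Ssum
    exact Fintype.sum_equiv
      ⟨basePat, fun δ => δ.1 0, fun q => rfl, fun δ => (pat_zero_eq δ).symm⟩
      (fun q => nuF F q) (fun δ => F 0 δ) (fun q => rfl)
  rw [h]
  exact Ssum_one F hFr hFw 0

lemma nuF_stat (hF0 : ∀ k δ, 0 ≤ F k δ)
    (hFnr : ∀ k δ, ¬ IsRunPat Δ δ → F k δ = 0)
    (hFr : ∀ k δ, F k δ = ∑ z : A × Q, F (k+1) (rext δ z))
    (hFl : ∀ k δ, F k δ = ∑ z : Q × A, F (k+1) (lext z δ))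
    (hFw : ∀ k, 0 < k → ∀ w : Fin k → A,
      (∑ g : Fin (k+1) → Q, F k (g, w)) = 1 / (Fintype.card A : ℝ) ^ k)
    (hαpos : ∀ q, 0 < α q)
    (hPsum : ∀ r, ∑ z : A × Q, Pw Δ α r z = 1) :
    ∀ q : Q, nuF F q = ∑ z : Q × A, (if Δ z.1 z.2 q then
      nuF F z.1 * (α q / (α z.1 * (Fintype.card A : ℝ))) else 0) := by
  intro q
  have h0 : nuF F q = ∑ z : Q × A, F 1 (lext z (basePat q)) := hFl 0 (basePat q)
  rw [h0]
  refine Finset.sum_congr rfl fun z _ => ?_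
  have hstart : (lext z (basePat q)).1 0 = z.1 := lext_fst_zero _ _
  have hendd : (lext z (basePat q)).1 (Fin.last 1) = q := by
    rw [lext_fst_last]
    rfl
  have htrans : ∀ j : Fin 1,
      ((lext z (basePat q)).1 j.castSucc = z.1
        ∧ (lext z (basePat q)).2 j = z.2 ∧ (lext z (basePat q)).1 j.succ = q) := by
    intro j
    have hj : j = 0 := Subsingleton.elim j 0
    subst hj
    refine ⟨?_, ?_, ?_⟩
    · have hc : (0 : Fin 1).castSucc = (0 : Fin 2) := rfl
      rw [hc]
      exact hstart
    · rfl
    · have hs : (0 : Fin 1).succ = Fin.last 1 := rfl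
      rw [hs]
      exact hendd
  by_cases hd : Δ z.1 z.2 q
  · rw [if_pos hd]
    have hrun : IsRunPat Δ (lext z (basePat q)) := by
      intro j
      obtain ⟨h1, h2, h3⟩ := htrans j
      rw [h1, h2, h3]
      exact hd
    have := F_formula Δ α F hF0 hFnr hFr hFl hFw hαpos hPsum 1 (lext z (basePat q)) hrun
    rw [this, hstart, hendd, pow_one]
    unfold nuF
    ring
  · rw [if_neg hd]
    refine hFnr 1 (lext z (basePat q)) ?_
    intro hr
    obtain ⟨h1, h2, h3⟩ := htrans 0
    have := hr 0
    rw [h1, h2, h3] at this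
    exact hd this

end WithF

end Abstract

section Perron

variable {Q A : Type*} [Fintype Q] [DecidableEq Q] [Fintype A] [DecidableEq A] [Nonempty A]
variable (Δ : Q → A → Q → Prop) [∀ p a q, Decidable (Δ p a q)]

lemma M_nonneg (M : Matrix Q Q ℝ)
    (hM : ∀ p q, M p q =
      ((Finset.univ.filter (fun a : A => Δ p a q)).card : ℝ) / Fintype.card A)
    (p q : Q) : 0 ≤ M p q := by
  rw [hM]
  positivity

lemma Mpow_nonneg (M : Matrix Q Q ℝ) (hMnn : ∀ p q, 0 ≤ M p q) :
    ∀ (n : ℕ) (p q : Q), 0 ≤ (M ^ n) p q := by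
  intro n
  induction n with
  | zero =>
    intro p q
    rw [pow_zero]
    by_cases h : p = q
    · rw [h, Matrix.one_apply_eq]; norm_num
    · rw [Matrix.one_apply_ne h]
  | succ n ih =>
    intro p q
    rw [pow_succ, Matrix.mul_apply]
    exact Finset.sum_nonneg fun r _ => mul_nonneg (ih p r) (hMnn r q)

lemma M_pos_of_trans (M : Matrix Q Q ℝ)
    (hM : ∀ p q, M p q =
      ((Finset.univ.filter (fun a : A => Δ p a q)).card : ℝ) / Fintype.card A)
    {r q : Q} {a : A} (h : Δ r a q) : 0 < M r q := by
  rw [hM]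
  have hKpos' : (0:ℝ) < Fintype.card A := by exact_mod_cast Fintype.card_pos
  have hmem : a ∈ Finset.univ.filter (fun a' : A => Δ r a' q) := by
    rw [Finset.mem_filter]
    exact ⟨Finset.mem_univ a, h⟩
  have hcard : 0 < (Finset.univ.filter (fun a' : A => Δ r a' q)).card :=
    Finset.card_pos.mpr ⟨a, hmem⟩
  have : (0:ℝ) < ((Finset.univ.filter (fun a' : A => Δ r a' q)).card : ℝ) := by
    exact_mod_cast hcard
  positivity

lemma Mpow_pos (M : Matrix Q Q ℝ)
    (hM : ∀ p q, M p q =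
      ((Finset.univ.filter (fun a : A => Δ p a q)).card : ℝ) / Fintype.card A) :
    ∀ (n : ℕ) (δ : (Fin (n+1) → Q) × (Fin n → A)), IsRunPat Δ δ →
      0 < (M ^ n) (δ.1 0) (δ.1 (Fin.last n)) := by
  intro n
  induction n with
  | zero =>
    intro δ _
    have h0 : Fin.last 0 = 0 := rfl
    rw [h0, pow_zero, Matrix.one_apply_eq]
    norm_num
  | succ n ih =>
    intro δ' hrun'
    have hδ'eq := pat_eq_rext δ'
    set δ : (Fin (n+1) → Q) × (Fin n → A) := (Fin.init δ'.1, Fin.init δ'.2) with hδdef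
    set z : A × Q := (δ'.2 (Fin.last n), δ'.1 (Fin.last (n+1))) with hzdef
    have hrun2 : IsRunPat Δ (rext δ z) := by rw [← hδ'eq]; exact hrun'
    have hrun : IsRunPat Δ δ := run_rext_init hrun2
    have hΔl : Δ (δ.1 (Fin.last n)) z.1 z.2 := run_rext_last hrun2
    have hstart : δ'.1 0 = δ.1 0 := by
      conv_lhs => rw [hδ'eq]
      rw [rext_fst_zero]
    have hend : δ'.1 (Fin.last (n+1)) = z.2 := rfl
    rw [hstart, hend, pow_succ, Matrix.mul_apply]
    have hterm : 0 < (M ^ n) (δ.1 0) (δ.1 (Fin.last n)) * M (δ.1 (Fin.last n)) z.2 :=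
      mul_pos (ih δ hrun) (M_pos_of_trans Δ M hM hΔl)
    refine lt_of_lt_of_le hterm ?_
    exact Finset.single_le_sum
      (f := fun r => (M ^ n) (δ.1 0) r * M r z.2)
      (fun r _ => mul_nonneg (Mpow_nonneg M (M_nonneg Δ M hM) n (δ.1 0) r)
        (M_nonneg Δ M hM r z.2))
      (Finset.mem_univ (δ.1 (Fin.last n)))

lemma perron_unique [Nonempty Q] (M : Matrix Q Q ℝ)
    (hMnn : ∀ p q, 0 ≤ M p q)
    (hirr : ∀ p q : Q, ∃ n : ℕ, 0 < (M ^ n) p q)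
    (π : Q → ℝ) (hπpos : ∀ q, 0 < π q) (hleft : π ᵥ* M = π)
    (β : Q → ℝ) (hβnn : ∀ q, 0 ≤ β q) (hβfix : β ᵥ* M = β) :
    ∃ c : ℝ, ∀ p, β p = c * π p := by
  obtain ⟨p0, _, hp0⟩ := Finset.exists_min_image Finset.univ (fun p => β p / π p)
    ⟨Classical.arbitrary Q, Finset.mem_univ _⟩
  set c := β p0 / π p0 with hcdef
  set v : Q → ℝ := fun p => β p - c * π p with hvdef
  have hvnn : ∀ p, 0 ≤ v p := by
    intro p
    have h1 : c ≤ β p / π p := hp0 p (Finset.mem_univ p)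
    have h2 := hπpos p
    rw [le_div_iff₀ h2] at h1
    simp only [hvdef]
    linarith
  have hvfix : v ᵥ* M = v := by
    funext q
    have h1 : (v ᵥ* M) q = (β ᵥ* M) q - c * (π ᵥ* M) q := by
      simp only [Matrix.vecMul, dotProduct, hvdef, sub_mul, mul_assoc,
        Finset.sum_sub_distrib, Finset.mul_sum]
    rw [h1, hβfix, hleft]
  have hvpow : ∀ n : ℕ, v ᵥ* (M ^ n) = v := by
    intro n
    induction n with
    | zero => rw [pow_zero, Matrix.vecMul_one]
    | succ n ih => rw [pow_succ, ← Matrix.vecMul_vecMul, ih, hvfix]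
  have hvp0 : v p0 = 0 := by
    simp only [hvdef, hcdef]
    have h2 := hπpos p0
    field_simp
    ring
  have hvzero : ∀ p, v p = 0 := by
    intro p
    obtain ⟨n, hn⟩ := hirr p p0
    have h1 : (v ᵥ* (M ^ n)) p0 = 0 := by rw [hvpow n]; exact hvp0
    have h2 : (v ᵥ* (M ^ n)) p0 = ∑ r : Q, v r * (M ^ n) r p0 := by
      simp [Matrix.vecMul, dotProduct]
    rw [h2] at h1
    have h3 := (Finset.sum_eq_zero_iff_of_nonneg (fun r _ =>
      mul_nonneg (hvnn r) (Mpow_nonneg M hMnn n r p0))).mp h1 p (Finset.mem_univ p)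
    rcases mul_eq_zero.mp h3 with h | h
    · exact h
    · exact absurd h (ne_of_gt hn)
  refine ⟨c, fun p => ?_⟩
  have := hvzero p
  simp only [hvdef] at this
  linarith

end Perron

section Count

variable {Q A : Type*} [Fintype Q] [DecidableEq Q] [Fintype A] [DecidableEq A]

def OccAt (s : ℕ → Q) (x : ℕ → A) {k : ℕ} (δ : (Fin (k+1) → Q) × (Fin k → A)) (i : ℕ) : Prop :=
  (∀ j : Fin (k+1), s (i + j) = δ.1 j) ∧ ∀ j : Fin k, x (i + j) = δ.2 j

instance (s : ℕ → Q) (x : ℕ → A) {k} (δ : (Fin (k+1) → Q) × (Fin k → A)) (i : ℕ) :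
    Decidable (OccAt s x δ i) := by unfold OccAt; infer_instance

def cnt (s : ℕ → Q) (x : ℕ → A) {k : ℕ} (δ : (Fin (k+1) → Q) × (Fin k → A)) (n : ℕ) : ℕ :=
  ((Finset.range n).filter (OccAt s x δ)).card

lemma occAt_rext {s : ℕ → Q} {x : ℕ → A} {k : ℕ} {δ : (Fin (k+1) → Q) × (Fin k → A)}
    {z : A × Q} {i : ℕ} :
    OccAt s x (rext δ z) i ↔ OccAt s x δ i ∧ x (i + k) = z.1 ∧ s (i + (k+1)) = z.2 := by
  constructor
  · rintro ⟨h1, h2⟩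
    refine ⟨⟨fun j => ?_, fun j => ?_⟩, ?_, ?_⟩
    · have := h1 j.castSucc
      simpa [rext, Fin.snoc_castSucc] using this
    · have := h2 j.castSucc
      simpa [rext, Fin.snoc_castSucc] using this
    · have := h2 (Fin.last k)
      simpa [rext, Fin.snoc_last] using this
    · have := h1 (Fin.last (k+1))
      simpa [rext, Fin.snoc_last] using this
  · rintro ⟨⟨h1, h2⟩, h3, h4⟩
    constructor
    · intro j
      rcases Fin.eq_castSucc_or_eq_last j with ⟨j', rfl⟩ | rfl
      · simpa [rext, Fin.snoc_castSucc] using h1 j'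
      · simpa [rext, Fin.snoc_last] using h4
    · intro j
      rcases Fin.eq_castSucc_or_eq_last j with ⟨j', rfl⟩ | rfl
      · simpa [rext, Fin.snoc_castSucc] using h2 j'
      · simpa [rext, Fin.snoc_last] using h3

lemma occAt_lext {s : ℕ → Q} {x : ℕ → A} {k : ℕ} {δ : (Fin (k+1) → Q) × (Fin k → A)}
    {z : Q × A} {i : ℕ} :
    OccAt s x (lext z δ) i ↔ s i = z.1 ∧ x i = z.2 ∧ OccAt s x δ (i+1) := by
  constructor
  · rintro ⟨h1, h2⟩
    refine ⟨by simpa [lext] using h1 0, by simpa [lext] using h2 0, fun j => ?_, fun j => ?_⟩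
    · have := h1 j.succ
      simpa [lext, Fin.cons_succ, Nat.add_comm 1 (j : ℕ), Nat.add_assoc] using this
    · have := h2 j.succ
      simpa [lext, Fin.cons_succ, Nat.add_comm 1 (j : ℕ), Nat.add_assoc] using this
  · rintro ⟨h0, h0', h1, h2⟩
    constructor
    · intro j
      rcases Fin.eq_zero_or_eq_succ j with rfl | ⟨j', rfl⟩
      · simpa [lext] using h0
      · have := h1 j'
        simpa [lext, Fin.cons_succ, Nat.add_comm 1 (j' : ℕ), Nat.add_assoc] using this
    · intro j
      rcases Fin.eq_zero_or_eq_succ j with rfl | ⟨j', rfl⟩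
      · simpa [lext] using h0'
      · have := h2 j'
        simpa [lext, Fin.cons_succ, Nat.add_comm 1 (j' : ℕ), Nat.add_assoc] using this

variable {s : ℕ → Q} {x : ℕ → A}

lemma cnt_le {k : ℕ} (δ : (Fin (k+1) → Q) × (Fin k → A)) (n : ℕ) : cnt s x δ n ≤ n := by
  classical
  calc ((Finset.range n).filter (OccAt s x δ)).card ≤ (Finset.range n).card :=
        Finset.card_filter_le _ _
    _ = n := Finset.card_range n

lemma cnt_rext {k : ℕ} (δ : (Fin (k+1) → Q) × (Fin k → A)) (n : ℕ) :
    cnt s x δ n = ∑ z : A × Q, cnt s x (rext δ z) n := by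
  classical
  unfold cnt
  rw [Finset.card_eq_sum_card_fiberwise
    (f := fun i => (x (i + k), s (i + (k+1)))) (t := Finset.univ) (fun _ _ => Finset.mem_univ _)]
  refine Finset.sum_congr rfl fun z _ => ?_
  congr 1
  ext i
  simp only [Finset.mem_filter, Finset.mem_range, occAt_rext]
  rw [Prod.ext_iff]
  tauto

lemma cnt_lext {k : ℕ} (δ : (Fin (k+1) → Q) × (Fin k → A)) (n : ℕ) :
    cnt s x δ n ≤ (∑ z : Q × A, cnt s x (lext z δ) n) + 1 ∧
    (∑ z : Q × A, cnt s x (lext z δ) n) ≤ cnt s x δ n + 1 := by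
  classical
  have hsum : (∑ z : Q × A, cnt s x (lext z δ) n)
      = ((Finset.range n).filter (fun i => OccAt s x δ (i+1))).card := by
    rw [Finset.card_eq_sum_card_fiberwise
      (f := fun i => (s i, x i)) (t := Finset.univ) (fun _ _ => Finset.mem_univ _)]
    refine (Finset.sum_congr rfl fun z _ => ?_).symm
    unfold cnt
    congr 1
    ext i
    simp only [Finset.mem_filter, Finset.mem_range, occAt_lext, Prod.ext_iff]
    tauto
  rw [hsum]
  set S₀ := (Finset.range n).filter (OccAt s x δ) with hS0
  set S₁ := (Finset.range n).filter (fun i => OccAt s x δ (i+1)) with hS1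
  have himg : S₁.image (· + 1) = (Finset.Ico 1 (n+1)).filter (OccAt s x δ) := by
    ext j
    simp only [Finset.mem_image, Finset.mem_filter, Finset.mem_range, Finset.mem_Ico, hS1]
    constructor
    · rintro ⟨i, ⟨hi, ho⟩, rfl⟩
      exact ⟨⟨by omega, by omega⟩, ho⟩
    · rintro ⟨⟨h1, h2⟩, ho⟩
      exact ⟨j - 1, ⟨by omega, by rwa [Nat.sub_add_cancel h1]⟩, Nat.sub_add_cancel h1⟩
  have hcard1 : S₁.card = ((Finset.Ico 1 (n+1)).filter (OccAt s x δ)).card := by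
    rw [← himg, Finset.card_image_of_injective _ (add_left_injective 1)]
  constructor
  · have hsub : S₀ ⊆ insert 0 ((Finset.Ico 1 (n+1)).filter (OccAt s x δ)) := by
      intro i hi
      simp only [hS0, Finset.mem_filter, Finset.mem_range] at hi
      rcases Nat.eq_zero_or_pos i with rfl | hpos
      · exact Finset.mem_insert_self _ _
      · exact Finset.mem_insert_of_mem (by
          simp only [Finset.mem_filter, Finset.mem_Ico]
          exact ⟨⟨hpos, by omega⟩, hi.2⟩)
    calc cnt s x δ n = S₀.card := rfl
      _ ≤ (insert 0 ((Finset.Ico 1 (n+1)).filter (OccAt s x δ))).card := Finset.card_le_card hsub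
      _ ≤ ((Finset.Ico 1 (n+1)).filter (OccAt s x δ)).card + 1 := Finset.card_insert_le _ _
      _ = S₁.card + 1 := by rw [hcard1]
  · have hsub : (Finset.Ico 1 (n+1)).filter (OccAt s x δ) ⊆ insert n S₀ := by
      intro j hj
      simp only [Finset.mem_filter, Finset.mem_Ico] at hj
      rcases Nat.lt_or_ge j n with hlt | hge
      · exact Finset.mem_insert_of_mem (by
          simp only [hS0, Finset.mem_filter, Finset.mem_range]
          exact ⟨hlt, hj.2⟩)
      · have : j = n := by omega
        subst this
        exact Finset.mem_insert_self _ _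
    calc S₁.card = ((Finset.Ico 1 (n+1)).filter (OccAt s x δ)).card := hcard1
      _ ≤ (insert n S₀).card := Finset.card_le_card hsub
      _ ≤ S₀.card + 1 := Finset.card_insert_le _ _

lemma word_occ_iff {k : ℕ} (w : Fin k → A) (i : ℕ) :
    (∀ j : Fin (List.ofFn w).length, x (i + j) = (List.ofFn w).get j) ↔
      ∀ j : Fin k, x (i + j) = w j := by
  constructor
  · intro h j
    have := h (Fin.cast (by simp) j)
    simpa [List.get_ofFn] using this
  · intro h j
    rw [List.get_ofFn]
    have := h (Fin.cast (List.length_ofFn (f := w)) j)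
    simpa using this

lemma cnt_label {k : ℕ} (w : Fin k → A) (n : ℕ) :
    (∑ g : Fin (k+1) → Q, cnt s x (g, w) n) = occCount x (List.ofFn w) n := by
  classical
  unfold occCount
  rw [Finset.card_eq_sum_card_fiberwise
    (f := fun i => (fun j : Fin (k+1) => s (i + j))) (t := Finset.univ)
    (fun _ _ => Finset.mem_univ _)]
  refine (Finset.sum_congr rfl fun g _ => ?_).symm
  unfold cnt
  congr 1
  ext i
  simp only [Finset.mem_filter, Finset.mem_range, OccAt, word_occ_iff]
  constructor
  · rintro ⟨⟨hi, hw⟩, hg⟩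
    exact ⟨hi, fun j => by rw [← congrFun hg j], fun j => hw j⟩
  · rintro ⟨hi, hs, hw⟩
    exact ⟨⟨hi, fun j => hw j⟩, funext fun j => hs j⟩

lemma cnt_nonrun {Δ : Q → A → Q → Prop} (hs : ∀ i, Δ (s i) (x i) (s (i + 1)))
    {k : ℕ} {δ : (Fin (k+1) → Q) × (Fin k → A)}
    (hnr : ¬ IsRunPat Δ δ) (n : ℕ) :
    cnt s x δ n = 0 := by
  classical
  unfold cnt
  rw [Finset.card_eq_zero]
  ext i
  simp only [Finset.mem_filter, Finset.mem_range, Finset.notMem_empty, iff_false, not_and]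
  intro _ ho
  exact absurd (fun j : Fin k => by
    have h1 := ho.1 j.castSucc
    have h2 := ho.1 j.succ
    have h3 := ho.2 j
    have := hs (i + j)
    rw [Fin.coe_castSucc] at h1
    rw [Fin.val_succ] at h2
    rw [h1, h3] at this
    rw [Nat.add_assoc] at this
    rwa [h2] at this) hnr

end Count


end RunFreq

open RunFreq in
theorem run_frequency {Q A : Type*} [Fintype Q] [DecidableEq Q]
    [Fintype A] [DecidableEq A] [Nonempty A]
    (Δ : Q → A → Q → Prop) [∀ p a q, Decidable (Δ p a q)] (I Fst : Set Q)
    (hsc : ∀ p q : Q, ∃ (n : ℕ) (w : Fin n → A) (s : Fin (n + 1) → Q), IsRun Δ w p q s)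
    (hunamb : ∀ (x : ℕ → A) (s s' : ℕ → Q),
      IsAcceptingRun Δ I Fst x s → IsAcceptingRun Δ I Fst x s' → s = s')
    (M : Matrix Q Q ℝ)
    (hM : ∀ p q, M p q =
      ((Finset.univ.filter (fun a : A => Δ p a q)).card : ℝ) / Fintype.card A)
    (hsr : ∀ z ∈ spectrum ℂ (M.map (Complex.ofReal)), ‖z‖ ≤ 1)
    (α π : Q → ℝ) (hαpos : ∀ q, 0 < α q) (hπpos : ∀ q, 0 < π q)
    (hright : M *ᵥ α = α) (hleft : π ᵥ* M = π)
    (hnorm : ∑ q, π q * α q = 1)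
    (x : ℕ → A) (s : ℕ → Q) (hrun : IsAcceptingRun Δ I Fst x s) (hx : IsNormal x)
    (m : ℕ) (g : Fin (m + 1) → Q) (b : Fin m → A)
    (hγ : ∀ i : Fin m, Δ (g i.castSucc) (b i) (g i.succ)) :
    Filter.Tendsto
      (fun n => (((Finset.range n).filter
        (fun i => (∀ j : Fin (m + 1), s (i + j) = g j) ∧
          ∀ j : Fin m, x (i + j) = b j)).card : ℝ) / n)
      Filter.atTop (nhds (π (g 0) * α (g (Fin.last m)) / (Fintype.card A : ℝ) ^ m)) := by
  classical
  haveI : Nonempty Q := ⟨g 0⟩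
  have hK : (0:ℝ) < Fintype.card A := by exact_mod_cast Fintype.card_pos
  have hs : ∀ i, Δ (s i) (x i) (s (i + 1)) := hrun.2.1
  rw [Filter.tendsto_iff_ultrafilter]
  intro 𝒰 h𝒰
  -- existence of frequencies along the ultrafilter
  have hex : ∀ (k : ℕ) (δ : (Fin (k+1) → Q) × (Fin k → A)),
      ∃ c : ℝ, Filter.Tendsto (fun n => (cnt s x δ n : ℝ) / n) (𝒰 : Filter ℕ) (nhds c) := by
    intro k δ
    have hmem : ∀ n : ℕ, ((cnt s x δ n : ℝ) / n) ∈ Set.Icc (0:ℝ) 1 := by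
      intro n
      rcases Nat.eq_zero_or_pos n with rfl | hn
      · simp
      · constructor
        · positivity
        · rw [div_le_one (by exact_mod_cast hn)]
          exact_mod_cast cnt_le δ n
    have hle : (Ultrafilter.map (fun n => (cnt s x δ n : ℝ)/n) 𝒰 : Filter ℝ)
        ≤ Filter.principal (Set.Icc 0 1) := by
      rw [Filter.le_principal_iff]
      exact Filter.mem_map.mpr (Filter.univ_mem' hmem)
    obtain ⟨c, _, hcle⟩ := isCompact_Icc.ultrafilter_le_nhds _ hle
    exact ⟨c, hcle⟩
  choose F hFts using hex
  have huniq : ∀ {k : ℕ} {δ : (Fin (k+1) → Q) × (Fin k → A)} {c : ℝ},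
      Filter.Tendsto (fun n => (cnt s x δ n : ℝ)/n) (𝒰 : Filter ℕ) (nhds c) → F k δ = c :=
    fun h => tendsto_nhds_unique (hFts _ _) h
  -- basic properties of F
  have hF0 : ∀ k δ, 0 ≤ F k δ := by
    intro k δ
    refine le_of_tendsto_of_tendsto tendsto_const_nhds (hFts k δ) ?_
    refine Filter.Eventually.of_forall fun n => ?_
    positivity
  have hFnr : ∀ k δ, ¬ IsRunPat Δ δ → F k δ = 0 := by
    intro k δ hnr
    refine huniq ?_
    have heq : (fun n => (cnt s x δ n : ℝ)/n) = fun _ => (0:ℝ) := by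
      funext n
      rw [cnt_nonrun hs hnr n]
      simp
    rw [heq]
    exact tendsto_const_nhds
  have hFr : ∀ k δ, F k δ = ∑ z : A × Q, F (k+1) (rext δ z) := by
    intro k δ
    have h1 : Filter.Tendsto (fun n => ∑ z : A × Q, (cnt s x (rext δ z) n : ℝ)/n)
        (𝒰 : Filter ℕ) (nhds (∑ z : A × Q, F (k+1) (rext δ z))) :=
      tendsto_finset_sum _ (fun z _ => hFts (k+1) (rext δ z))
    refine huniq ?_
    have heq : (fun n => (cnt s x δ n : ℝ)/n)
        = fun n => ∑ z : A × Q, (cnt s x (rext δ z) n : ℝ)/n := by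
      funext n
      rw [cnt_rext δ n]
      push_cast
      rw [Finset.sum_div]
    rw [heq]
    exact h1
  have hFl : ∀ k δ, F k δ = ∑ z : Q × A, F (k+1) (lext z δ) := by
    intro k δ
    have h1 : Filter.Tendsto (fun n => ∑ z : Q × A, (cnt s x (lext z δ) n : ℝ)/n)
        (𝒰 : Filter ℕ) (nhds (∑ z : Q × A, F (k+1) (lext z δ))) :=
      tendsto_finset_sum _ (fun z _ => hFts (k+1) (lext z δ))
    have hdiff : Filter.Tendsto
        (fun n => (∑ z : Q × A, (cnt s x (lext z δ) n : ℝ)/n) - (cnt s x δ n : ℝ)/n)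
        Filter.atTop (nhds 0) := by
      refine squeeze_zero_norm (fun n => ?_) tendsto_one_div_atTop_nhds_zero_nat
      obtain ⟨hA, hB⟩ := cnt_lext (s := s) (x := x) δ n
      have hrw : (∑ z : Q × A, (cnt s x (lext z δ) n : ℝ)/n) - (cnt s x δ n : ℝ)/n
          = ((∑ z : Q × A, (cnt s x (lext z δ) n : ℝ)) - (cnt s x δ n : ℝ))/n := by
        rw [← Finset.sum_div, div_sub_div_same]
      rw [hrw, norm_div, Real.norm_natCast]
      rcases Nat.eq_zero_or_pos n with rfl | hn
      · simp
      · have hup : (∑ z : Q × A, (cnt s x (lext z δ) n : ℝ))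
            ≤ (cnt s x δ n : ℝ) + 1 := by exact_mod_cast hB
        have hlo : (cnt s x δ n : ℝ)
            ≤ (∑ z : Q × A, (cnt s x (lext z δ) n : ℝ)) + 1 := by exact_mod_cast hA
        have hnum : ‖(∑ z : Q × A, (cnt s x (lext z δ) n : ℝ)) - (cnt s x δ n : ℝ)‖
            ≤ 1 := by
          rw [Real.norm_eq_abs, abs_sub_le_iff]
          constructor <;> linarith
        have hnpos : (0:ℝ) < n := by exact_mod_cast hn
        exact (div_le_div_iff_of_pos_right hnpos).mpr hnum
    have h2 : Filter.Tendsto (fun n => (cnt s x δ n : ℝ)/n) (𝒰 : Filter ℕ)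
        (nhds (∑ z : Q × A, F (k+1) (lext z δ))) := by
      have h3 := Filter.Tendsto.sub h1 (hdiff.mono_left h𝒰)
      simp only [sub_sub_cancel, sub_zero] at h3
      exact h3
    exact huniq h2
  have hFw : ∀ k, 0 < k → ∀ w : Fin k → A,
      (∑ g' : Fin (k+1) → Q, F k (g', w)) = 1 / (Fintype.card A : ℝ) ^ k := by
    intro k hk w
    have hnil : List.ofFn w ≠ [] := by
      intro hnil
      have := congrArg List.length hnil
      simp at this
      omega
    have h0 := hx (List.ofFn w) hnil
    have hlen : (List.ofFn w).length = k := List.length_ofFn (f := w)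
    rw [hlen] at h0
    have h1 : Filter.Tendsto (fun n => ∑ g' : Fin (k+1) → Q, (cnt s x (g', w) n : ℝ)/n)
        (𝒰 : Filter ℕ) (nhds (∑ g' : Fin (k+1) → Q, F k (g', w))) :=
      tendsto_finset_sum _ (fun g' _ => hFts k (g', w))
    have heq : (fun n => ∑ g' : Fin (k+1) → Q, (cnt s x (g', w) n : ℝ)/n)
        = fun n => (occCount x (List.ofFn w) n : ℝ)/n := by
      funext n
      rw [← cnt_label (s := s) w n]
      push_cast
      rw [Finset.sum_div]
    rw [heq] at h1
    exact tendsto_nhds_unique h1 (h0.mono_left h𝒰)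
  -- the abstract machinery
  have hPsum : ∀ r, ∑ z : A × Q, Pw Δ α r z = 1 := Pw_sum Δ α hαpos M hM hright
  have hform := F_formula Δ α F hF0 hFnr hFr hFl hFw hαpos hPsum
  have hstat := nuF_stat Δ α F hF0 hFnr hFr hFl hFw hαpos hPsum
  have hsum1 := nuF_sum F hFr hFw
  -- the stationary vector
  set β : Q → ℝ := fun p => nuF F p / α p with hβdef
  have hβfix : β ᵥ* M = β := by
    funext q
    have hq : nuF F q = α q * ∑ p : Q, (nuF F p / α p) * M p q := by
      rw [hstat q, Fintype.sum_prod_type]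
      rw [Finset.mul_sum]
      refine Finset.sum_congr rfl fun p _ => ?_
      have hcardM : ((Finset.univ.filter (fun a : A => Δ p a q)).card : ℝ)
          = M p q * Fintype.card A := by
        rw [hM p q]
        rw [div_mul_cancel₀ _ (ne_of_gt hK)]
      have hinner : (∑ a : A, if Δ (p, a).1 (p, a).2 q then
          nuF F (p, a).1 * (α q / (α (p, a).1 * (Fintype.card A : ℝ))) else 0)
          = ((Finset.univ.filter (fun a : A => Δ p a q)).card : ℝ)
            * (nuF F p * (α q / (α p * (Fintype.card A : ℝ)))) := by
        dsimp only
        rw [← Finset.sum_filter, Finset.sum_const, nsmul_eq_mul]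
      rw [hinner, hcardM]
      have hαp := hαpos p
      field_simp
    have hvm : (β ᵥ* M) q = ∑ p : Q, (nuF F p / α p) * M p q := by
      simp [Matrix.vecMul, dotProduct, hβdef]
    rw [hvm]
    have hαq := hαpos q
    simp only [hβdef]
    rw [eq_div_iff (ne_of_gt hαq)]
    rw [hq]
    ring
  have hβnn : ∀ p, 0 ≤ β p := by
    intro p
    have h1 : 0 ≤ nuF F p := hF0 0 _
    have h2 := hαpos p
    simp only [hβdef]
    positivity
  have hirr : ∀ p q : Q, ∃ n : ℕ, 0 < (M ^ n) p q := by
    intro p q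
    obtain ⟨n, w, s', h1, h2, h3⟩ := hsc p q
    refine ⟨n, ?_⟩
    have := Mpow_pos Δ M hM n (s', w) h3
    rwa [show (s', w).1 0 = p from h1, show (s', w).1 (Fin.last n) = q from h2] at this
  obtain ⟨c, hc⟩ := perron_unique M (M_nonneg Δ M hM) hirr π hπpos hleft β hβnn hβfix
  have hnua : ∀ p, nuF F p = c * (π p * α p) := by
    intro p
    have h1 := hc p
    have h2 := hαpos p
    simp only [hβdef] at h1
    field_simp at h1
    rw [h1]
    ring
  have hc1 : c = 1 := by
    have h1 : ∑ q : Q, nuF F q = ∑ q : Q, c * (π q * α q) :=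
      Finset.sum_congr rfl fun q _ => hnua q
    rw [hsum1, ← Finset.mul_sum, hnorm, mul_one] at h1
    exact h1.symm
  have hnu : ∀ p, nuF F p = π p * α p := by
    intro p
    rw [hnua p, hc1, one_mul]
  -- conclusion
  have hγ' : IsRunPat Δ (g, b) := fun j => hγ j
  have hval : F m (g, b) = π (g 0) * α (g (Fin.last m)) / (Fintype.card A : ℝ) ^ m := by
    have h1 := hform m (g, b) hγ'
    have h2 : ((g, b) : (Fin (m+1) → Q) × (Fin m → A)).1 0 = g 0 := rfl
    have h3 : ((g, b) : (Fin (m+1) → Q) × (Fin m → A)).1 (Fin.last m) = g (Fin.last m) := rfl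
    rw [h1, h2, h3, hnu (g 0)]
    have hαp := hαpos (g 0)
    have hKm : (0:ℝ) < (Fintype.card A : ℝ) ^ m := by positivity
    field_simp
  have hcnteq : ∀ n : ℕ, ((Finset.range n).filter
      (fun i => (∀ j : Fin (m + 1), s (i + j) = g j) ∧
        ∀ j : Fin m, x (i + j) = b j)).card = cnt s x (g, b) n := by
    intro n
    unfold cnt
    congr 1
  have hfin : (fun n => (((Finset.range n).filter
      (fun i => (∀ j : Fin (m + 1), s (i + j) = g j) ∧
        ∀ j : Fin m, x (i + j) = b j)).card : ℝ) / n)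
      = fun n => (cnt s x (g, b) n : ℝ) / n := by
    funext n
    rw [hcnteq n]
  rw [hfin, ← hval]
  exact hFts m (g, b)
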